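/- For every trimming level α ∈ (0,1), the α-trimmed Bayes error satisfies Err_α(P) = (Err(P) − α)_+ / (1 − α); moreover Err_α(P), which is defined as the infimum over Q ∈ 𝓡_α(P) of the Bayes error Err(Q), coincides with the infimum over all classifiers g of the trimmed classification error R_α(g). -/

import Mathlib

open MeasureTheory

noncomputable section

/-- The classification error `R(g) = P({(y,x) : g(x) ≠ y})`. -/
def classErr {p : ℕ} (P : Measure (Bool × (Fin p → ℝ))) (g : (Fin p → ℝ) → Bool) : ℝ :=
  (P {z | g z.2 ≠ z.1}).toReal

/-- The set of `α`-trimmed versions of a measure `μ`. -/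
def trimmedSet {Ω : Type*} [MeasurableSpace Ω] (μ : Measure Ω) (α : ℝ) :
    Set (Measure Ω) :=
  {ν | IsProbabilityMeasure ν ∧ ν ≪ μ ∧
    ∀ᵐ z ∂μ, ν.rnDeriv μ z ≤ ENNReal.ofReal (1 / (1 - α))}

/-- The trimmed classification error `R_α(g) = inf_{Q ∈ 𝓡_α(P)} Q(g(x) ≠ y)`. -/
def trimmedErr {p : ℕ} (P : Measure (Bool × (Fin p → ℝ))) (α : ℝ)
    (g : (Fin p → ℝ) → Bool) : ℝ :=
  sInf ((fun Q => (Q {z | g z.2 ≠ z.1}).toReal) '' trimmedSet P α)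

/-- The Bayes error `Err(Q) = inf_g Q(g(x) ≠ y)`, infimum over measurable classifiers. -/
def bayesErr {p : ℕ} (Q : Measure (Bool × (Fin p → ℝ))) : ℝ :=
  sInf ((fun g => classErr Q g) '' {g : (Fin p → ℝ) → Bool | Measurable g})

/-- The `α`-trimmed Bayes error `Err_α(P) = inf_{Q ∈ 𝓡_α(P)} Err(Q)`. -/
def trimmedBayesErr {p : ℕ} (P : Measure (Bool × (Fin p → ℝ))) (α : ℝ) : ℝ :=
  sInf (bayesErr '' trimmedSet P α)

/- ### Auxiliary lemmas -/

section Aux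

variable {Ω : Type*} [MeasurableSpace Ω]

lemma toReal_compl_prob (Q : Measure Ω) [IsProbabilityMeasure Q] {A : Set Ω}
    (hA : MeasurableSet A) : (Q Aᶜ).toReal = 1 - (Q A).toReal := by
  have h := measure_add_measure_compl (μ := Q) hA
  rw [measure_univ] at h
  have h2 : (Q A).toReal + (Q Aᶜ).toReal = 1 := by
    rw [← ENNReal.toReal_add (measure_ne_top Q A) (measure_ne_top Q Aᶜ), h, ENNReal.toReal_one]
  linarith

lemma toReal_prob_le_one (Q : Measure Ω) [IsProbabilityMeasure Q] (A : Set Ω) :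
    (Q A).toReal ≤ 1 := by
  have := ENNReal.toReal_mono ENNReal.one_ne_top (prob_le_one (μ := Q) (s := A))
  simpa using this

/-- `P` itself is an `α`-trimmed version of `P`. -/
lemma self_mem_trimmedSet (P : Measure Ω) [IsProbabilityMeasure P] {α : ℝ}
    (hα : α ∈ Set.Ioo (0 : ℝ) 1) : P ∈ trimmedSet P α := by
  refine ⟨inferInstance, Measure.AbsolutelyContinuous.rfl, ?_⟩
  filter_upwards [Measure.rnDeriv_self P] with z hz
  rw [hz]
  rw [ENNReal.one_le_ofReal]
  rw [le_div_iff₀ (by linarith [hα.2])]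
  linarith [hα.1]

/-- Lower bound: any trimmed version assigns mass at least `(P A - α)⁺/(1-α)` to `A`. -/
lemma trimmed_lower (P : Measure Ω) [IsProbabilityMeasure P] {α : ℝ}
    (hα : α ∈ Set.Ioo (0 : ℝ) 1) {Q : Measure Ω} (hQ : Q ∈ trimmedSet P α)
    {A : Set Ω} (hA : MeasurableSet A) :
    max ((P A).toReal - α) 0 / (1 - α) ≤ (Q A).toReal := by
  obtain ⟨hQprob, hQac, hQbd⟩ := hQ
  haveI := hQprob
  have h1α : (0:ℝ) < 1 - α := by linarith [hα.2]
  set pA := (P A).toReal with hpA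
  set qA := (Q A).toReal with hqA
  -- Q Aᶜ ≤ (1/(1-α)) * P Aᶜ
  have hkey : Q Aᶜ ≤ ENNReal.ofReal (1 / (1 - α)) * P Aᶜ := by
    calc Q Aᶜ = ∫⁻ x in Aᶜ, Q.rnDeriv P x ∂P :=
          (Measure.setLIntegral_rnDeriv hQac Aᶜ).symm
      _ ≤ ∫⁻ _x in Aᶜ, ENNReal.ofReal (1 / (1 - α)) ∂P :=
          lintegral_mono_ae (ae_restrict_of_ae hQbd)
      _ = ENNReal.ofReal (1 / (1 - α)) * P Aᶜ := setLIntegral_const _ _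
  have hR : (Q Aᶜ).toReal ≤ (1 / (1 - α)) * (P Aᶜ).toReal := by
    have hfin : ENNReal.ofReal (1 / (1 - α)) * P Aᶜ ≠ ⊤ :=
      ENNReal.mul_ne_top ENNReal.ofReal_ne_top (measure_ne_top P Aᶜ)
    have := ENNReal.toReal_mono hfin hkey
    rwa [ENNReal.toReal_mul, ENNReal.toReal_ofReal (by positivity)] at this
  rw [toReal_compl_prob Q hA, toReal_compl_prob P hA] at hR
  have hq0 : 0 ≤ qA := ENNReal.toReal_nonneg
  rw [div_le_iff₀ h1α]
  rcases le_total (pA - α) 0 with h | h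
  · rw [max_eq_right h]
    positivity
  · rw [max_eq_left h]
    have hmul : (1 - qA) * (1 - α) ≤ (1 / (1 - α)) * (1 - pA) * (1 - α) :=
      mul_le_mul_of_nonneg_right hR h1α.le
    have : (1 / (1 - α)) * (1 - pA) * (1 - α) = 1 - pA := by
      field_simp
    nlinarith [hmul]

/-- Construction of a trimmed version with prescribed constant densities on `A` and `Aᶜ`. -/
lemma trimmed_construct (P : Measure Ω) [IsProbabilityMeasure P] {α : ℝ}
    (hα : α ∈ Set.Ioo (0 : ℝ) 1) {A : Set Ω} (hA : MeasurableSet A)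
    {b d : ℝ} (hb0 : 0 ≤ b) (hd0 : 0 ≤ d) (hb : b ≤ 1 / (1 - α)) (hd : d ≤ 1 / (1 - α))
    (hsum : b * (P A).toReal + d * (1 - (P A).toReal) = 1) :
    ∃ Q ∈ trimmedSet P α, (Q A).toReal = b * (P A).toReal := by
  set pA := (P A).toReal with hpA
  have hpA1 : pA ≤ 1 := toReal_prob_le_one P A
  have hpA0 : 0 ≤ pA := ENNReal.toReal_nonneg
  set f : Ω → ENNReal := fun z =>
    A.indicator (fun _ => ENNReal.ofReal b) z + Aᶜ.indicator (fun _ => ENNReal.ofReal d) z with hf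
  have hfA : ∀ x ∈ A, f x = ENNReal.ofReal b := fun x hx => by
    simp [hf, Set.indicator_of_mem hx,
      Set.indicator_of_notMem (show x ∉ Aᶜ by simp [hx])]
  have hfAc : ∀ x ∈ Aᶜ, f x = ENNReal.ofReal d := fun x hx => by
    simp [hf, Set.indicator_of_mem hx, Set.indicator_of_notMem (show x ∉ A from hx)]
  have hfm : Measurable f :=
    (measurable_const.indicator hA).add (measurable_const.indicator hA.compl)
  set Q := P.withDensity f with hQ
  have hQA : Q A = ENNReal.ofReal (b * pA) := by
    rw [hQ, withDensity_apply _ hA]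
    rw [setLIntegral_congr_fun hA (fun x hx => hfA x hx), setLIntegral_const]
    rw [ENNReal.ofReal_mul hb0, ENNReal.ofReal_toReal (measure_ne_top P A)]
  have hQAc : Q Aᶜ = ENNReal.ofReal (d * (1 - pA)) := by
    rw [hQ, withDensity_apply _ hA.compl]
    rw [setLIntegral_congr_fun hA.compl (fun x hx => hfAc x hx), setLIntegral_const]
    rw [ENNReal.ofReal_mul hd0]
    congr 1
    rw [← ENNReal.ofReal_toReal (measure_ne_top P Aᶜ), toReal_compl_prob P hA]
  have hQuniv : Q Set.univ = 1 := by
    rw [← measure_add_measure_compl (μ := Q) hA, hQA, hQAc,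
      ← ENNReal.ofReal_add (by positivity) (by nlinarith), hsum, ENNReal.ofReal_one]
  have hQprob : IsProbabilityMeasure Q := ⟨hQuniv⟩
  refine ⟨Q, ⟨hQprob, withDensity_absolutelyContinuous P f, ?_⟩, ?_⟩
  · filter_upwards [Measure.rnDeriv_withDensity P hfm] with z hz
    rw [hz]
    by_cases hzA : z ∈ A
    · rw [hfA z hzA]; exact ENNReal.ofReal_le_ofReal hb
    · rw [hfAc z hzA]; exact ENNReal.ofReal_le_ofReal hd
  · rw [hQA, ENNReal.toReal_ofReal (by positivity)]

/-- The exact minimizer: there is a trimmed version with `Q A = (P A - α)⁺/(1-α)`. -/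
lemma trimmed_exists (P : Measure Ω) [IsProbabilityMeasure P] {α : ℝ}
    (hα : α ∈ Set.Ioo (0 : ℝ) 1) {A : Set Ω} (hA : MeasurableSet A) :
    ∃ Q ∈ trimmedSet P α, (Q A).toReal = max ((P A).toReal - α) 0 / (1 - α) := by
  have h1α : (0:ℝ) < 1 - α := by linarith [hα.2]
  set pA := (P A).toReal with hpA
  have hpA1 : pA ≤ 1 := toReal_prob_le_one P A
  have hpA0 : 0 ≤ pA := ENNReal.toReal_nonneg
  rcases le_or_gt pA α with h | h
  · -- pA ≤ α : take b = 0, d = 1/(1-pA)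
    have h1p : (0:ℝ) < 1 - pA := by linarith [hα.2]
    obtain ⟨Q, hQmem, hQval⟩ := trimmed_construct P hα hA (b := 0) (d := 1 / (1 - pA))
      le_rfl (one_div_nonneg.mpr h1p.le)
      (one_div_nonneg.mpr h1α.le)
      (by rw [div_le_div_iff₀ h1p h1α]; linarith)
      (by field_simp; rw [← hpA]; ring)
    refine ⟨Q, hQmem, ?_⟩
    rw [hQval, max_eq_right (by linarith)]
    simp
  · -- pA > α : take b = (pA - α)/((1-α) * pA), d = 1/(1-α)
    have hpApos : 0 < pA := lt_of_le_of_lt hα.1.le h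
    obtain ⟨Q, hQmem, hQval⟩ := trimmed_construct P hα hA
      (b := (pA - α) / ((1 - α) * pA)) (d := 1 / (1 - α))
      (div_nonneg (by linarith) (mul_nonneg h1α.le hpApos.le)) (one_div_nonneg.mpr h1α.le)
      (by rw [div_le_div_iff₀ (by positivity) h1α]
          nlinarith [mul_le_mul_of_nonneg_right (show pA - α ≤ pA by linarith [hα.1]) h1α.le])
      le_rfl
      (by field_simp; ring)
    refine ⟨Q, hQmem, ?_⟩
    rw [hQval, max_eq_left (by linarith)]
    field_simp
    ring

end Aux

section Main

variable {p : ℕ}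

lemma measurableSet_errSet {g : (Fin p → ℝ) → Bool} (hg : Measurable g) :
    MeasurableSet {z : Bool × (Fin p → ℝ) | g z.2 ≠ z.1} := by
  have : {z : Bool × (Fin p → ℝ) | g z.2 ≠ z.1} =
      (fun z : Bool × (Fin p → ℝ) => (g z.2, z.1)) ⁻¹' {q : Bool × Bool | q.1 ≠ q.2} := rfl
  rw [this]
  exact ((hg.comp measurable_snd).prodMk measurable_fst) (Set.toFinite _).measurableSet

lemma bddBelow_classErrs (Q : Measure (Bool × (Fin p → ℝ))) :
    BddBelow ((fun g => classErr Q g) '' {g : (Fin p → ℝ) → Bool | Measurable g}) := by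
  refine ⟨0, fun x hx => ?_⟩
  obtain ⟨g, -, rfl⟩ := hx
  exact ENNReal.toReal_nonneg

lemma classErrs_nonempty (Q : Measure (Bool × (Fin p → ℝ))) :
    ((fun g => classErr Q g) '' {g : (Fin p → ℝ) → Bool | Measurable g}).Nonempty :=
  ⟨classErr Q (fun _ => true), ⟨fun _ => true, measurable_const, rfl⟩⟩

lemma bayesErr_le (Q : Measure (Bool × (Fin p → ℝ))) {g : (Fin p → ℝ) → Bool}
    (hg : Measurable g) : bayesErr Q ≤ classErr Q g :=
  csInf_le (bddBelow_classErrs Q) ⟨g, hg, rfl⟩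

/-- For a measurable classifier, the trimmed error is exactly `(R(g) - α)⁺/(1-α)`. -/
lemma trimmedErr_eq (P : Measure (Bool × (Fin p → ℝ))) [IsProbabilityMeasure P] {α : ℝ}
    (hα : α ∈ Set.Ioo (0 : ℝ) 1) {g : (Fin p → ℝ) → Bool} (hg : Measurable g) :
    trimmedErr P α g = max (classErr P g - α) 0 / (1 - α) := by
  have hA := measurableSet_errSet hg
  apply le_antisymm
  · obtain ⟨Q, hQmem, hQval⟩ := trimmed_exists P hα hA
    exact le_trans (csInf_le ⟨0, fun x ⟨Q', _, hx⟩ => hx ▸ ENNReal.toReal_nonneg⟩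
      ⟨Q, hQmem, rfl⟩) (le_of_eq hQval)
  · refine le_csInf ⟨_, ⟨P, self_mem_trimmedSet P hα, rfl⟩⟩ ?_
    rintro x ⟨Q, hQmem, rfl⟩
    exact trimmed_lower P hα hQmem hA

lemma T_mono {α a b : ℝ} (hα : α ∈ Set.Ioo (0 : ℝ) 1) (h : a ≤ b) :
    max (a - α) 0 / (1 - α) ≤ max (b - α) 0 / (1 - α) := by
  have h1α : (0:ℝ) < 1 - α := by linarith [hα.2]
  gcongr

/-- Proposition 2: `Err_α(P) = (Err(P) − α)_+/(1 − α)`, and moreover the `α`-trimmed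
Bayes error coincides with the infimum over classifiers of the trimmed error. -/
theorem trimmedBayesErr_eq {p : ℕ} (P : Measure (Bool × (Fin p → ℝ)))
    [IsProbabilityMeasure P] {α : ℝ} (hα : α ∈ Set.Ioo (0 : ℝ) 1) :
    trimmedBayesErr P α = max (bayesErr P - α) 0 / (1 - α) ∧
    trimmedBayesErr P α =
      sInf ((fun g => trimmedErr P α g) '' {g : (Fin p → ℝ) → Bool | Measurable g}) := by
  have h1α : (0:ℝ) < 1 - α := by linarith [hα.2]
  set E := bayesErr P with hE
  set m := max (E - α) 0 / (1 - α) with hm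
  -- approximation: for δ > 0 there is a measurable g with classErr P g < E + δ
  have happrox : ∀ δ : ℝ, 0 < δ → ∃ g : (Fin p → ℝ) → Bool,
      Measurable g ∧ classErr P g < E + δ := by
    intro δ hδ
    have : sInf ((fun g => classErr P g) '' {g : (Fin p → ℝ) → Bool | Measurable g}) < E + δ := by
      rw [hE]; unfold bayesErr; linarith
    obtain ⟨x, ⟨g, hg, rfl⟩, hlt⟩ := exists_lt_of_csInf_lt (classErrs_nonempty P) this
    exact ⟨g, hg, hlt⟩
  -- key : T(E + δ) ≤ m + δ/(1-α)
  have hTadd : ∀ a δ : ℝ, 0 ≤ δ → a ≤ E + δ →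
      max (a - α) 0 / (1 - α) ≤ m + δ / (1 - α) := by
    intro a δ hδ ha
    rw [hm, ← add_div, div_le_div_iff₀ h1α h1α]
    have : max (a - α) 0 ≤ max (E - α) 0 + δ :=
      max_le (by linarith [le_max_left (E - α) (0:ℝ)]) (by positivity)
    nlinarith [this]
  -- first equality
  have heq1 : trimmedBayesErr P α = m := by
    apply le_antisymm
    · apply le_of_forall_pos_le_add
      intro ε hε
      obtain ⟨g, hg, hlt⟩ := happrox (ε * (1 - α)) (by positivity)
      obtain ⟨Q, hQmem, hQval⟩ := trimmed_exists P hα (measurableSet_errSet hg)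
      have h1 : trimmedBayesErr P α ≤ bayesErr Q :=
        csInf_le ⟨0, fun x ⟨Q', hQ', hx⟩ => hx ▸ le_csInf (classErrs_nonempty Q')
          (fun y ⟨g', _, hy⟩ => hy ▸ ENNReal.toReal_nonneg)⟩ ⟨Q, hQmem, rfl⟩
      have h2 : bayesErr Q ≤ classErr Q g := bayesErr_le Q hg
      have h3 : classErr Q g = max (classErr P g - α) 0 / (1 - α) := hQval
      have h4 : max (classErr P g - α) 0 / (1 - α) ≤ m + (ε * (1 - α)) / (1 - α) :=
        hTadd _ _ (by positivity) hlt.le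
      have h5 : (ε * (1 - α)) / (1 - α) = ε := by field_simp
      linarith
    · refine le_csInf ⟨_, ⟨P, self_mem_trimmedSet P hα, rfl⟩⟩ ?_
      rintro x ⟨Q, hQmem, rfl⟩
      refine le_csInf (classErrs_nonempty Q) ?_
      rintro y ⟨g, hg, rfl⟩
      calc m ≤ max (classErr P g - α) 0 / (1 - α) :=
            T_mono hα (bayesErr_le P hg)
        _ ≤ classErr Q g := trimmed_lower P hα hQmem (measurableSet_errSet hg)
  refine ⟨heq1, ?_⟩
  rw [heq1]
  -- second equality
  apply le_antisymm
  · refine le_csInf ⟨_, ⟨fun _ => true, measurable_const, rfl⟩⟩ ?_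
    rintro x ⟨g, hg, rfl⟩
    show m ≤ trimmedErr P α g
    rw [trimmedErr_eq P hα hg]
    exact T_mono hα (bayesErr_le P hg)
  · apply le_of_forall_pos_le_add
    intro ε hε
    obtain ⟨g, hg, hlt⟩ := happrox (ε * (1 - α)) (by positivity)
    have h1 : sInf ((fun g => trimmedErr P α g) '' {g : (Fin p → ℝ) → Bool | Measurable g})
        ≤ trimmedErr P α g := by
      refine csInf_le ⟨0, ?_⟩ ⟨g, hg, rfl⟩
      rintro x ⟨g', hg', rfl⟩
      show (0:ℝ) ≤ trimmedErr P α g'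
      rw [trimmedErr_eq P hα hg']
      positivity
    rw [trimmedErr_eq P hα hg] at h1
    have h4 : max (classErr P g - α) 0 / (1 - α) ≤ m + (ε * (1 - α)) / (1 - α) :=
      hTadd _ _ (by positivity) hlt.le
    have h5 : (ε * (1 - α)) / (1 - α) = ε := by field_simp
    linarith

end Main

end
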